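/- Let γ, δ ∈ ⟨ψ₁,ψ₃⟩ be morphisms such that γ(0) and δ(0) both end in the letter 0. Let u_γ, u_δ and u_{γδ} denote γ(0), δ(0) and (γ∘δ)(0) with their last letter removed, and suppose Ψ_γ, Ψ_δ and Ψ_{γδ} are morphisms satisfying the conjugation relations γ(a)·u_γ = u_γ·Ψ_γ(a), δ(a)·u_δ = u_δ·Ψ_δ(a), and (γ∘δ)(a)·u_{γδ} = u_{γδ}·Ψ_{γδ}(a) for both letters a ∈ {0,1}. Then Ψ_{γδ} = Ψ_γ∘Ψ_δ. -/

import Mathlib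

/-- A morphism of the free monoid `{0,1}*`, determined by the images of the two
letters (`false` encodes the letter 0, `true` encodes the letter 1). -/
abbrev Morph := Bool → List Bool

/-- The identity morphism. -/
def idm : Morph := fun a => [a]

/-- Composition of morphisms: `(M σ τ)(a) = σ(τ(a))`. -/
def M (σ τ : Morph) : Morph := fun a => (τ a).flatMap σ

/-- `compAll g [i₁, …, iₙ] = g i₁ ∘ g i₂ ∘ ⋯ ∘ g iₙ` (the identity for `n = 0`). -/
def compAll (g : Bool → Morph) (l : List Bool) : Morph :=
  l.foldr (fun i acc => M (g i) acc) idm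

/-- Iterated composition of a morphism with itself. -/
def mpow (σ : Morph) : ℕ → Morph
  | 0 => idm
  | k + 1 => M σ (mpow σ k)

/-- The length-`n` prefix of an infinite word. -/
def wpref (w : ℕ → Bool) (n : ℕ) : List Bool := (List.range n).map w

/-- `σ` fixes the infinite word `w`: for every `n`, the finite word
`σ(w(0))σ(w(1))⋯σ(w(n-1))` is a prefix of `w`. -/
def Fixes (σ : Morph) (w : ℕ → Bool) : Prop :=
  ∀ n : ℕ, (wpref w n).flatMap σ = wpref w ((wpref w n).flatMap σ).length

/-- The integer value `⌊(n+1)α + ρ⌋ - ⌊nα + ρ⌋` of the Sturmian word `s_{α,ρ}`. -/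
noncomputable def sfl (α ρ : ℝ) (n : ℕ) : ℤ :=
  ⌊((n : ℝ) + 1) * α + ρ⌋ - ⌊(n : ℝ) * α + ρ⌋

/-- The integer value `⌈(n+1)α + ρ⌉ - ⌈nα + ρ⌉` of the Sturmian word `s'_{α,ρ}`. -/
noncomputable def scl (α ρ : ℝ) (n : ℕ) : ℤ :=
  ⌈((n : ℝ) + 1) * α + ρ⌉ - ⌈(n : ℝ) * α + ρ⌉

/-- The Sturmian word `s_{α,ρ}` as an infinite binary word. -/
noncomputable def sw (α ρ : ℝ) : ℕ → Bool := fun n => decide (sfl α ρ n = 1)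

/-- The Sturmian word `s'_{α,ρ}` as an infinite binary word. -/
noncomputable def sw' (α ρ : ℝ) : ℕ → Bool := fun n => decide (scl α ρ n = 1)

/-- The characteristic word `c_α = s_{α,α}`. -/
noncomputable def cw (α : ℝ) : ℕ → Bool := sw α α

/-- `ψ₁ : 0 → 01, 1 → 0` (the Fibonacci morphism, `φ₁`). -/
def psi1 : Morph := fun a => match a with | false => [false, true] | true => [false]

/-- `ψ₃ : 0 → 0, 1 → 01` (the morphism `G`, i.e. `φ₀`). -/
def psi3 : Morph := fun a => match a with | false => [false] | true => [false, true]

/-- `ψ₄ : 0 → 0, 1 → 10`. -/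
def psi4 : Morph := fun a => match a with | false => [false] | true => [true, false]

/-- `ψ₇ : 0 → 10, 1 → 1`. -/
def psi7 : Morph := fun a => match a with | false => [true, false] | true => [true]

/-- `ψ₈ : 0 → 01, 1 → 1`. -/
def psi8 : Morph := fun a => match a with | false => [false, true] | true => [true]

/-- Time reversal of a morphism. -/
def trev (σ : Morph) : Morph := fun a => (σ a).reverse

/-- The exchange morphism `E : 0 → 1, 1 → 0`. -/
def Em : Morph := fun a => [!a]

/-- Generators `φ₀, φ₁` indexed by a bit: `false ↦ φ₀ (= ψ₃)`, `true ↦ φ₁ (= ψ₁)`. -/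
def phiGen : Bool → Morph := fun b => match b with | false => psi3 | true => psi1

/-- Generators of `⟨ψ₁, ψ₃⟩`: `false` encodes the index 1 (`ψ₁`),
`true` encodes the index 3 (`ψ₃`). -/
def g13 : Bool → Morph := fun b => match b with | false => psi1 | true => psi3

/-- Generators of `⟨ψ₃, ψ₈⟩`: `false ↦ ψ₃`, `true ↦ ψ₈`. -/
def g38 : Bool → Morph := fun b => match b with | false => psi3 | true => psi8

/-- Generators of `⟨ψ₄, ψ₇⟩`: `false ↦ ψ₄`, `true ↦ ψ₇`. -/
def g47 : Bool → Morph := fun b => match b with | false => psi4 | true => psi7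

/-- The Kepler matrices `K₀ = [[1,0],[1,1]]` and `K₁ = [[0,1],[1,1]]`. -/
def K : Bool → Matrix (Fin 2) (Fin 2) ℕ
  | false => !![1, 0; 1, 1]
  | true => !![0, 1; 1, 1]

/-- For `γ, δ ∈ ⟨ψ₁, ψ₃⟩` with `γ(0)`, `δ(0)` ending in `0`,
the conjugate morphisms satisfy `Ψ_{γδ} = Ψ_γ ∘ Ψ_δ`. -/
theorem conjugate_multiplicative (γ δ : Morph)
    (hγmem : ∃ l : List Bool, γ = compAll g13 l)
    (hδmem : ∃ l : List Bool, δ = compAll g13 l)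
    (hγ0 : (γ false).getLast? = some false)
    (hδ0 : (δ false).getLast? = some false)
    (Ψγ Ψδ Ψγδ : Morph)
    (hcγ : ∀ a : Bool, γ a ++ (γ false).dropLast = (γ false).dropLast ++ Ψγ a)
    (hcδ : ∀ a : Bool, δ a ++ (δ false).dropLast = (δ false).dropLast ++ Ψδ a)
    (hcγδ : ∀ a : Bool,
      (M γ δ) a ++ ((M γ δ) false).dropLast = ((M γ δ) false).dropLast ++ Ψγδ a) :
    Ψγδ = M Ψγ Ψδ := by
  funext a
  -- notation
  set uγ := (γ false).dropLast with huγ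
  set uδ := (δ false).dropLast with huδ
  have hγne : γ false ≠ [] := by
    intro h; rw [h] at hγ0; simp at hγ0
  have hδne : δ false ≠ [] := by
    intro h; rw [h] at hδ0; simp at hδ0
  have hδ0' : δ false = uδ ++ [false] := by
    have h1 := List.dropLast_append_getLast hδne
    have h2 : (δ false).getLast hδne = false := by
      have := List.getLast?_eq_getLast hδne
      rw [this] at hδ0; exact (Option.some_inj.mp hδ0.symm).symm
    rw [h2] at h1; exact h1.symm
  -- extend conjugation to words
  have key : ∀ (σ Ψ : Morph) (u : List Bool),
      (∀ b : Bool, σ b ++ u = u ++ Ψ b) →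
      ∀ w : List Bool, w.flatMap σ ++ u = u ++ w.flatMap Ψ := by
    intro σ Ψ u h w
    induction w with
    | nil => simp
    | cons b w ih =>
      calc (b :: w).flatMap σ ++ u = σ b ++ (w.flatMap σ ++ u) := by
            simp [List.flatMap_cons, List.append_assoc]
        _ = σ b ++ (u ++ w.flatMap Ψ) := by rw [ih]
        _ = (σ b ++ u) ++ w.flatMap Ψ := by rw [List.append_assoc]
        _ = (u ++ Ψ b) ++ w.flatMap Ψ := by rw [h b]
        _ = u ++ (b :: w).flatMap Ψ := by
            simp [List.flatMap_cons, List.append_assoc]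
  -- compute the prefix for the composition
  have hu : ((M γ δ) false).dropLast = uδ.flatMap γ ++ uγ := by
    show ((δ false).flatMap γ).dropLast = _
    rw [hδ0', List.flatMap_append]
    simp only [List.flatMap_cons, List.flatMap_nil, List.append_nil]
    rw [List.dropLast_append_of_ne_nil hγne]
  have h1 := hcγδ a
  rw [hu] at h1
  have h2 : (M γ δ) a ++ (uδ.flatMap γ ++ uγ)
      = (uδ.flatMap γ ++ uγ) ++ (M Ψγ Ψδ) a := by
    calc (M γ δ) a ++ (uδ.flatMap γ ++ uγ)
        = ((δ a).flatMap γ ++ uδ.flatMap γ) ++ uγ := by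
          show (δ a).flatMap γ ++ _ = _
          rw [List.append_assoc]
      _ = (δ a ++ uδ).flatMap γ ++ uγ := by rw [List.flatMap_append]
      _ = (uδ ++ Ψδ a).flatMap γ ++ uγ := by rw [hcδ a]
      _ = uδ.flatMap γ ++ ((Ψδ a).flatMap γ ++ uγ) := by
          rw [List.flatMap_append, List.append_assoc]
      _ = uδ.flatMap γ ++ (uγ ++ (Ψδ a).flatMap Ψγ) := by
          rw [key γ Ψγ uγ hcγ (Ψδ a)]
      _ = (uδ.flatMap γ ++ uγ) ++ (M Ψγ Ψδ) a := by
          rw [List.append_assoc]; rfl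
  rw [h2] at h1
  exact (List.append_cancel_left h1).symm
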